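/- Let q_c be a root of unity associated with p ≥ 2. Let j, m be half-integers with j − m ∈ ℤ≥0 and j + m ∈ ℤ≥0, and let i be an integer with i ≥ j − m. Write i = r·p + a, j − m = u·p + d, and i + j + m + 1 = w·p + g with r, u, w ∈ ℤ≥0 and 0 ≤ a, d, g ≤ p−1. Then: (1) if 2j + 1 ≡ 0 (mod p) (j critical), the rational function q ↦ a_{i,j,m}(q) is regular at q_c; (2) if 2j + 1 ≢ 0 (mod p), then a_{i,j,m} is singular at q_c if and only if g ≤ a and d ≤ a; moreover any singularity is a simple pole. -/

import Mathlib

open Matrix Filter Topology BigOperators Finset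

noncomputable section

/-- Spin configurations: basis labels of `(ℂ²)^{⊗n}`; `0` is `+`, `1` is `−`. -/
abbrev Spins (n : ℕ) := Fin n → Fin 2

/-- σ⁺ = [[0,1],[0,0]] -/
def sigmaP : Matrix (Fin 2) (Fin 2) ℂ := fun a b => if a = 0 ∧ b = 1 then 1 else 0

/-- σ⁻ = [[0,0],[1,0]] -/
def sigmaM : Matrix (Fin 2) (Fin 2) ℂ := fun a b => if a = 1 ∧ b = 0 then 1 else 0

/-- diagonal entry of K = diag(v, v⁻¹) -/
def Kdiag (v : ℂ) (a : Fin 2) : ℂ := if a = 0 then v else v⁻¹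

/-- `S_i^A = K^{⊗(i−1)} ⊗ A ⊗ (K⁻¹)^{⊗(n−i)}` as a matrix on `(ℂ²)^{⊗n}`. -/
def siteOp (n : ℕ) (v : ℂ) (A : Matrix (Fin 2) (Fin 2) ℂ) (i : Fin n) :
    Matrix (Spins n) (Spins n) ℂ :=
  fun x y => ∏ k : Fin n,
    if k < i then (if x k = y k then Kdiag v (x k) else 0)
    else if k = i then A (x k) (y k)
    else (if x k = y k then Kdiag v⁻¹ (x k) else 0)

/-- `S^+ = Σ_i S_i^+`. -/
def SpOp (n : ℕ) (v : ℂ) : Matrix (Spins n) (Spins n) ℂ := ∑ i : Fin n, siteOp n v sigmaP i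

/-- `S^- = Σ_i S_i^-`. -/
def SmOp (n : ℕ) (v : ℂ) : Matrix (Spins n) (Spins n) ℂ := ∑ i : Fin n, siteOp n v sigmaM i

/-- `Σ^z = Σ_i 1 ⊗ ⋯ ⊗ σ^z ⊗ ⋯ ⊗ 1` (diagonal). -/
def SzOp (n : ℕ) : Matrix (Spins n) (Spins n) ℂ :=
  fun x y => if x = y then ∑ k : Fin n, (if x k = 0 then (1 : ℂ) else -1) else 0

/-- symmetric q-number `[k] = (q^k − q^{−k})/(q − q⁻¹)`. -/
def qNum (q : ℂ) (k : ℤ) : ℂ := (q ^ k - q ^ (-k)) / (q - q⁻¹)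

/-- q-factorial `[k]! = [k][k−1]⋯[1]`, `[0]! = 1`. -/
def qFact (q : ℂ) : ℕ → ℂ
  | 0 => 1
  | k + 1 => qNum q (k + 1) * qFact q k

/-- q-binomial `[k choose l]`, zero unless `0 ≤ l ≤ k`. -/
def qBinom (q : ℂ) (k l : ℤ) : ℂ :=
  if 0 ≤ l ∧ l ≤ k then qFact q k.toNat / (qFact q l.toNat * qFact q (k - l).toNat) else 0

/-- `q` is generic: nonzero and not a root of unity. -/
def Generic (q : ℂ) : Prop := q ≠ 0 ∧ ∀ k : ℕ, 0 < k → q ^ k ≠ 1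

def GenericSet : Set ℂ := {q | Generic q}

/-- the root of unity `q` is associated with `p`: `p ≥ 2` is minimal with `q^{2p} = 1`. -/
def AssocRootOfUnity (q : ℂ) (p : ℕ) : Prop :=
  2 ≤ p ∧ q ^ (2 * p) = 1 ∧ ∀ k : ℕ, 0 < k → k < p → q ^ (2 * k) ≠ 1

/-- the coefficient `a_{i,j,m}` of the paper, with `k = j − m` and `s = j + m`:
`a = (−1)^{i+k} [i choose k] [i+s+1 choose i+1]⁻¹ [k+s+1] / [i+1]`. -/
def aCoeff (q : ℂ) (i k s : ℤ) : ℂ :=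
  (-1 : ℂ) ^ (i + k) * qBinom q i k * (qBinom q (i + s + 1) (i + 1))⁻¹ *
    qNum q (k + s + 1) / qNum q (i + 1)

/-- `S_r = (S^−)^r (S^+)^r / ([r]!)²` with `q = v²`. -/
def SOp (n : ℕ) (v : ℂ) (r : ℕ) : Matrix (Spins n) (Spins n) ℂ :=
  ((qFact (v ^ 2) r) ^ 2)⁻¹ • (SmOp n v ^ r * SpOp n v ^ r)

/-- a function of `q` is regular at `q_c` if it has a finite limit as `q → q_c`
through generic values of `q`. -/
def RegularAt (f : ℂ → ℂ) (qc : ℂ) : Prop :=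
  ∃ L : ℂ, Tendsto f (𝓝[GenericSet] qc) (𝓝 L)


-- ===== helpers =====

variable {p : ℕ} {qc : ℂ}

lemma assoc_ne_zero (h : AssocRootOfUnity qc p) : qc ≠ 0 := by
  rintro rfl
  have h2 := h.2.1
  rw [zero_pow (by have := h.1; omega : 2 * p ≠ 0)] at h2
  exact one_ne_zero h2.symm

lemma assoc_sq_ne_one (h : AssocRootOfUnity qc p) : qc ^ 2 ≠ 1 := by
  have := h.2.2 1 one_pos (by have := h.1; omega : 1 < p)
  simpa using this

lemma assoc_sub_inv_ne (h : AssocRootOfUnity qc p) : qc - qc⁻¹ ≠ 0 := by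
  intro he
  apply assoc_sq_ne_one h
  have h0 := assoc_ne_zero h
  have : qc = qc⁻¹ := by linear_combination he
  calc qc ^ 2 = qc * qc := sq qc
    _ = qc * qc⁻¹ := by rw [← this]
    _ = 1 := mul_inv_cancel₀ h0

lemma assoc_pow_two_mul_eq_one_iff (h : AssocRootOfUnity qc p) (n : ℕ) :
    qc ^ (2 * n) = 1 ↔ p ∣ n := by
  have hp : 0 < p := by have := h.1; omega
  have h1 : (qc ^ 2) ^ p = 1 := by rw [← pow_mul]; exact h.2.1
  have hfin : IsOfFinOrder (qc ^ 2) := isOfFinOrder_iff_pow_eq_one.2 ⟨p, hp, h1⟩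
  have hpos : 0 < orderOf (qc ^ 2) := hfin.orderOf_pos
  have hdvd : orderOf (qc ^ 2) ∣ p := orderOf_dvd_of_pow_eq_one h1
  have hord : orderOf (qc ^ 2) = p := by
    rcases lt_or_eq_of_le (Nat.le_of_dvd hp hdvd) with hlt | he
    · exact absurd (by rw [pow_mul]; exact pow_orderOf_eq_one _) (h.2.2 _ hpos hlt)
    · exact he
  rw [pow_mul, ← hord, ← orderOf_dvd_iff_pow_eq_one]

lemma generic_ne_qc (h : AssocRootOfUnity qc p) {q : ℂ} (hq : q ∈ GenericSet) : q ≠ qc := by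
  rintro rfl
  exact hq.2 (2 * p) (by have := h.1; omega) h.2.1

lemma qc_not_generic (h : AssocRootOfUnity qc p) : qc ∉ GenericSet := fun hq =>
  generic_ne_qc h hq rfl

lemma generic_sub_inv_ne {q : ℂ} (hq : q ∈ GenericSet) : q - q⁻¹ ≠ 0 := by
  intro he
  apply hq.2 2 two_pos
  have : q = q⁻¹ := by linear_combination he
  calc q ^ 2 = q * q := sq q
    _ = q * q⁻¹ := by rw [← this]
    _ = 1 := mul_inv_cancel₀ hq.1

-- pole order framework
def PoleOrd (qc : ℂ) (e : ℤ) (F : ℂ → ℂ) : Prop :=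
  ∃ L : ℂ, L ≠ 0 ∧ Tendsto (fun q => (q - qc) ^ e * F q) (𝓝[GenericSet] qc) (𝓝 L)

lemma PoleOrd.congr_e {e e' : ℤ} {F : ℂ → ℂ} (he : e = e') (h : PoleOrd qc e F) :
    PoleOrd qc e' F := he ▸ h

lemma PoleOrd.mul (h : AssocRootOfUnity qc p) {e e' : ℤ} {F G : ℂ → ℂ}
    (hF : PoleOrd qc e F) (hG : PoleOrd qc e' G) :
    PoleOrd qc (e + e') (fun q => F q * G q) := by
  obtain ⟨L, hL, hTF⟩ := hF
  obtain ⟨L', hL', hTG⟩ := hG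
  refine ⟨L * L', mul_ne_zero hL hL', ?_⟩
  refine (hTF.mul hTG).congr' ?_
  filter_upwards [self_mem_nhdsWithin] with q hq
  have hne : q - qc ≠ 0 := sub_ne_zero.mpr (generic_ne_qc h hq)
  rw [zpow_add₀ hne]; ring

lemma PoleOrd.inv {e : ℤ} {F : ℂ → ℂ} (hF : PoleOrd qc e F) :
    PoleOrd qc (-e) (fun q => (F q)⁻¹) := by
  obtain ⟨L, hL, hTF⟩ := hF
  refine ⟨L⁻¹, inv_ne_zero hL, ?_⟩
  have := hTF.inv₀ hL
  refine this.congr (fun q => ?_)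
  rw [mul_inv, ← _root_.zpow_neg]

lemma PoleOrd.const {c : ℂ} (hc : c ≠ 0) : PoleOrd qc 0 (fun _ => c) :=
  ⟨c, hc, by simpa using tendsto_const_nhds⟩


lemma qNum_natCast (q : ℂ) (n : ℕ) : qNum q (n : ℤ) = (q ^ n - (q ^ n)⁻¹) / (q - q⁻¹) := by
  rw [qNum, _root_.zpow_neg, zpow_natCast]

lemma poleOrd_qNum_of_not_dvd (h : AssocRootOfUnity qc p) {n : ℕ} (hn : 0 < n)
    (hnd : ¬ p ∣ n) : PoleOrd qc 0 (fun q => qNum q (n : ℤ)) := by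
  have hqc0 : qc ≠ 0 := assoc_ne_zero h
  have hpow : qc ^ n ≠ 0 := pow_ne_zero _ hqc0
  have hden : qc - qc⁻¹ ≠ 0 := assoc_sub_inv_ne h
  have hnum : qc ^ n - (qc ^ n)⁻¹ ≠ 0 := by
    intro he
    have h1 : qc ^ n = (qc ^ n)⁻¹ := by linear_combination he
    have h2 : qc ^ (2 * n) = 1 := by
      rw [two_mul, pow_add]
      calc qc ^ n * qc ^ n = qc ^ n * (qc ^ n)⁻¹ := by rw [← h1]
        _ = 1 := mul_inv_cancel₀ hpow
    exact hnd ((assoc_pow_two_mul_eq_one_iff h n).1 h2)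
  refine ⟨qNum qc (n : ℤ), by rw [qNum_natCast]; exact div_ne_zero hnum hden, ?_⟩
  have hc : ContinuousAt (fun q : ℂ => (q ^ n - (q ^ n)⁻¹) / (q - q⁻¹)) qc := by
    apply ContinuousAt.div
    · exact (continuousAt_pow qc n).sub ((continuousAt_pow qc n).inv₀ hpow)
    · exact continuousAt_id.sub (continuousAt_inv₀ hqc0)
    · exact hden
  have h4 := hc.tendsto.mono_left (nhdsWithin_le_nhds (s := GenericSet))
  have h3 : Tendsto (fun q => qNum q (n:ℤ)) (𝓝[GenericSet] qc) (𝓝 (qNum qc (n:ℤ))) := by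
    rw [qNum_natCast qc]
    exact h4.congr (fun q => (qNum_natCast q n).symm)
  exact h3.congr (fun q => by rw [zpow_zero, one_mul])

lemma poleOrd_qNum_of_dvd (h : AssocRootOfUnity qc p) {n : ℕ} (hn : 0 < n)
    (hd : p ∣ n) : PoleOrd qc (-1) (fun q => qNum q (n : ℤ)) := by
  have hqc0 : qc ≠ 0 := assoc_ne_zero h
  have hden : qc - qc⁻¹ ≠ 0 := assoc_sub_inv_ne h
  have hone : qc ^ (2 * n) = 1 := (assoc_pow_two_mul_eq_one_iff h n).2 hd
  set G : ℂ → ℂ := fun q =>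
    (q ^ n)⁻¹ * (∑ t ∈ range (2 * n), q ^ t * qc ^ (2 * n - 1 - t)) / (q - q⁻¹) with hG
  have hsum : (∑ t ∈ range (2 * n), qc ^ t * qc ^ (2 * n - 1 - t))
      = (2 * n : ℕ) * qc ^ (2 * n - 1) := by
    rw [Finset.sum_congr rfl (fun t ht => ?_), Finset.sum_const, card_range, nsmul_eq_mul]
    rw [← pow_add]
    congr 1
    have := Finset.mem_range.1 ht
    omega
  have hLne : G qc ≠ 0 := by
    rw [hG]
    apply div_ne_zero _ hden
    apply mul_ne_zero (inv_ne_zero (pow_ne_zero _ hqc0))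
    rw [hsum]
    exact mul_ne_zero (Nat.cast_ne_zero.mpr (by omega)) (pow_ne_zero _ hqc0)
  refine ⟨G qc, hLne, ?_⟩
  have hc : ContinuousAt G qc := by
    rw [hG]
    apply ContinuousAt.div
    · exact ((continuousAt_pow qc n).inv₀ (pow_ne_zero _ hqc0)).mul
        ((continuous_finset_sum (range (2 * n)) fun t _ =>
          (continuous_pow t).mul continuous_const).continuousAt)
    · exact continuousAt_id.sub (continuousAt_inv₀ hqc0)
    · exact hden
  refine (hc.tendsto.mono_left (nhdsWithin_le_nhds (s := GenericSet))).congr' ?_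
  filter_upwards [self_mem_nhdsWithin] with q hq
  have hq0 : q ≠ 0 := hq.1
  have hqqc : q - qc ≠ 0 := sub_ne_zero.mpr (generic_ne_qc h hq)
  have hqd : q - q⁻¹ ≠ 0 := generic_sub_inv_ne hq
  have hkey : q ^ n - (q ^ n)⁻¹
      = (q ^ n)⁻¹ * ((∑ t ∈ range (2 * n), q ^ t * qc ^ (2 * n - 1 - t)) * (q - qc)) := by
    rw [geom_sum₂_mul, hone]
    have h2 : q ^ (2 * n) = q ^ n * q ^ n := by rw [two_mul, pow_add]
    field_simp [h2]
    ring
  have hqnum : qNum q (n : ℤ) = (q - qc) * G q := by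
    rw [hG, qNum_natCast, hkey]
    field_simp
  rw [_root_.zpow_neg_one, hqnum, inv_mul_cancel_left₀ hqqc]

lemma poleOrd_qFact (h : AssocRootOfUnity qc p) (n : ℕ) :
    PoleOrd qc (-((n / p : ℕ) : ℤ)) (fun q => qFact q n) := by
  induction n with
  | zero => simpa [qFact] using (PoleOrd.const (qc := qc) one_ne_zero)
  | succ n ih =>
    have hstep : (fun q => qFact q (n + 1)) = fun q => qNum q (((n + 1 : ℕ) : ℤ)) * qFact q n := by
      funext q; rw [qFact]; norm_num
    rw [hstep]
    have hdiv : ((n + 1) / p : ℕ) = n / p + if p ∣ n + 1 then 1 else 0 := Nat.succ_div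
    by_cases hdvd : p ∣ (n + 1)
    · refine (PoleOrd.mul h (poleOrd_qNum_of_dvd h (Nat.succ_pos n) hdvd) ih).congr_e ?_
      rw [hdiv, if_pos hdvd]; push_cast; ring
    · refine (PoleOrd.mul h (poleOrd_qNum_of_not_dvd h (Nat.succ_pos n) hdvd) ih).congr_e ?_
      rw [hdiv, if_neg hdvd]; push_cast; ring

lemma regularAt_of_poleOrd (h : AssocRootOfUnity qc p) {e : ℤ} {F : ℂ → ℂ}
    (hE : e ≤ 0) (hP : PoleOrd qc e F) : RegularAt F qc := by
  obtain ⟨L, hL, hT⟩ := hP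
  refine ⟨(0 : ℂ) ^ ((-e).toNat) * L, ?_⟩
  have h1 : Tendsto (fun q : ℂ => (q - qc) ^ ((-e).toNat))
      (𝓝[GenericSet] qc) (𝓝 ((0:ℂ) ^ ((-e).toNat))) := by
    have hcont : Continuous (fun q : ℂ => (q - qc) ^ ((-e).toNat)) :=
      (continuous_sub_right qc).pow _
    simpa using (hcont.tendsto qc).mono_left (nhdsWithin_le_nhds (s := GenericSet))
  refine (h1.mul hT).congr' ?_
  filter_upwards [self_mem_nhdsWithin] with q hq
  have hne : q - qc ≠ 0 := sub_ne_zero.mpr (generic_ne_qc h hq)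
  have h2 : ((q - qc) ^ ((-e).toNat) : ℂ) = (q - qc) ^ (-e) := by
    rw [← zpow_natCast, Int.toNat_of_nonneg (by omega : (0:ℤ) ≤ -e)]
  rw [h2, ← mul_assoc, ← zpow_add₀ hne]
  simp

lemma simplePole_of_poleOrd (h : AssocRootOfUnity qc p) {e : ℤ} {F : ℂ → ℂ}
    (hE : e ≤ 1) (hP : PoleOrd qc e F) :
    ∃ L : ℂ, Tendsto (fun q => (q - qc) * F q) (𝓝[GenericSet] qc) (𝓝 L) := by
  obtain ⟨L, hL, hT⟩ := hP
  refine ⟨(0 : ℂ) ^ ((1 - e).toNat) * L, ?_⟩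
  have h1 : Tendsto (fun q : ℂ => (q - qc) ^ ((1 - e).toNat))
      (𝓝[GenericSet] qc) (𝓝 ((0:ℂ) ^ ((1 - e).toNat))) := by
    have hcont : Continuous (fun q : ℂ => (q - qc) ^ ((1 - e).toNat)) :=
      (continuous_sub_right qc).pow _
    simpa using (hcont.tendsto qc).mono_left (nhdsWithin_le_nhds (s := GenericSet))
  refine (h1.mul hT).congr' ?_
  filter_upwards [self_mem_nhdsWithin] with q hq
  have hne : q - qc ≠ 0 := sub_ne_zero.mpr (generic_ne_qc h hq)
  have h2 : ((q - qc) ^ ((1 - e).toNat) : ℂ) = (q - qc) ^ (1 - e) := by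
    rw [← zpow_natCast, Int.toNat_of_nonneg (by omega : (0:ℤ) ≤ 1 - e)]
  rw [h2, ← mul_assoc, ← zpow_add₀ hne]
  norm_num

lemma assoc_abs_one (h : AssocRootOfUnity qc p) : ‖qc‖ = 1 := by
  have h1 : ‖qc‖ ^ (2 * p) = 1 := by
    rw [← norm_pow, h.2.1, norm_one]
  rcases lt_trichotomy (‖qc‖) 1 with hlt | he | hgt
  · exfalso
    have := pow_lt_one₀ (norm_nonneg _) hlt (by have := h.1; omega : 2 * p ≠ 0)
    rw [h1] at this; exact lt_irrefl _ this
  · exact he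
  · exfalso
    have := one_lt_pow₀ hgt (by have := h.1; omega : 2 * p ≠ 0)
    rw [h1] at this; exact lt_irrefl _ this

lemma neBot_genericSet (h : AssocRootOfUnity qc p) : (𝓝[GenericSet] qc).NeBot := by
  rw [← mem_closure_iff_nhdsWithin_neBot]
  have habs : ‖qc‖ = 1 := assoc_abs_one h
  have ht : Tendsto (fun t : ℝ => (t : ℂ) * qc) (𝓝[<] (1 : ℝ)) (𝓝 qc) := by
    have hc : Tendsto (fun t : ℝ => (t : ℂ) * qc) (𝓝 (1 : ℝ)) (𝓝 ((1 : ℂ) * qc)) :=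
      (Complex.continuous_ofReal.mul continuous_const).tendsto 1
    rw [one_mul] at hc
    exact hc.mono_left nhdsWithin_le_nhds
  refine mem_closure_of_tendsto ht ?_
  filter_upwards [Ioo_mem_nhdsLT_of_mem (by norm_num : (1:ℝ) ∈ Set.Ioc (0:ℝ) 1)] with t ht'
  obtain ⟨ht0, ht1⟩ := ht'
  refine ⟨mul_ne_zero (by exact_mod_cast ne_of_gt ht0) (assoc_ne_zero h), fun n hn hone => ?_⟩
  have : ‖((t : ℂ) * qc) ^ n‖ = 1 := by rw [hone, norm_one]
  rw [norm_pow, norm_mul, habs, mul_one, Complex.norm_real, Real.norm_eq_abs, abs_of_pos ht0] at this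
  have hlt : t ^ n < 1 := pow_lt_one₀ (le_of_lt ht0) ht1 (by omega)
  rw [this] at hlt; exact lt_irrefl _ hlt

lemma not_regularAt_of_poleOrd_one (h : AssocRootOfUnity qc p) {F : ℂ → ℂ}
    (hP : PoleOrd qc 1 F) : ¬ RegularAt F qc := by
  rintro ⟨L', hT'⟩
  obtain ⟨L, hL, hT⟩ := hP
  have hnb : (𝓝[GenericSet] qc).NeBot := neBot_genericSet h
  have h0 : Tendsto (fun q : ℂ => q - qc) (𝓝[GenericSet] qc) (𝓝 0) := by
    have hcont : Continuous (fun q : ℂ => q - qc) := continuous_sub_right qc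
    simpa using (hcont.tendsto qc).mono_left (nhdsWithin_le_nhds (s := GenericSet))
  have h2 : Tendsto (fun q => (q - qc) ^ (1:ℤ) * F q) (𝓝[GenericSet] qc) (𝓝 (0 * L')) := by
    refine (h0.mul hT').congr (fun q => ?_)
    rw [zpow_one]
  rw [zero_mul] at h2
  exact hL (tendsto_nhds_unique hT h2)


lemma helper_div {p : ℕ} (x y : ℕ) (hp : 0 < p) (hy : y < p) : (x * p + y) / p = x := by
  rw [add_comm, mul_comm, Nat.add_mul_div_left _ _ hp, Nat.div_eq_of_lt hy, zero_add]

lemma helper_dvd {p : ℕ} (x y : ℕ) (hy : y < p) : p ∣ (x * p + y) ↔ y = 0 := by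
  rw [Nat.dvd_iff_mod_eq_zero, add_comm, mul_comm, Nat.add_mul_mod_self_left,
    Nat.mod_eq_of_lt hy]



/-- regularity/singularity of the coefficient `a_{i,j,m}` at a root of
unity `q_c` associated with `p`. Here `M2 = 2m`, `k = j − m`, with
`i = rp+a`, `k = up+d`, `i+j+m+1 = wp+g`, `0 ≤ a,d,g ≤ p−1`. (1) if `j` is
critical (`2j+1 ≡ 0 mod p`) the coefficient is regular at `q_c`; (2) otherwise it is
singular iff `g ≤ a` and `d ≤ a`; moreover any singularity is a simple pole. -/
theorem stmt13 (p : ℕ) (qc : ℂ) (hroot : AssocRootOfUnity qc p)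
    (M2 : ℤ) (k : ℕ) (hjm : 0 ≤ M2 + k) (i : ℕ) (hik : k ≤ i)
    (r u w a d g : ℕ) (ha : a ≤ p - 1) (hd : d ≤ p - 1) (hg : g ≤ p - 1)
    (hi : i = r * p + a) (hk : k = u * p + d)
    (hw : (i : ℤ) + (M2 + k) + 1 = (w : ℤ) * p + g) :
    ((M2 + 2 * k + 1) % (p : ℤ) = 0 →
        RegularAt (fun q => aCoeff q i k (M2 + k)) qc) ∧
    ((M2 + 2 * k + 1) % (p : ℤ) ≠ 0 →
        (¬ RegularAt (fun q => aCoeff q i k (M2 + k)) qc ↔ g ≤ a ∧ d ≤ a)) ∧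
    (∃ L : ℂ, Tendsto (fun q => (q - qc) * aCoeff q i k (M2 + k))
        (𝓝[GenericSet] qc) (𝓝 L)) := by
  have hp2 := hroot.1
  have hp : 0 < p := by omega
  set S : ℕ := (M2 + ↑k).toNat with hSdef
  have hS : (S : ℤ) = M2 + ↑k := Int.toNat_of_nonneg hjm
  have hap : a < p := by omega
  have hdp : d < p := by omega
  have hgp : g < p := by omega
  have hW : i + S + 1 = w * p + g := by
    have h1 : ((i + S + 1 : ℕ) : ℤ) = ((w * p + g : ℕ) : ℤ) := by
      push_cast; linarith [hS, hw]
    exact_mod_cast h1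
  have hdiv_i : i / p = r := by rw [hi]; exact helper_div r a hp hap
  have hdiv_k : k / p = u := by rw [hk]; exact helper_div u d hp hdp
  have hdiv_w : (i + S + 1) / p = w := by rw [hW]; exact helper_div w g hp hgp
  have hur : u ≤ r := by
    have h2 := Nat.div_le_div_right (c := p) hik
    rwa [hdiv_i, hdiv_k] at h2
  have hrw : r ≤ w := by
    have h2 := Nat.div_le_div_right (c := p) (show i ≤ i + S + 1 by omega)
    rwa [hdiv_i, hdiv_w] at h2
  have hmulru : u * p ≤ r * p := Nat.mul_le_mul_right p hur
  have hmulrw : r * p ≤ w * p := Nat.mul_le_mul_right p hrw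
  have hsub_ru1 : (r - u - 1) * p = r * p - u * p - p := by
    rw [Nat.sub_mul, Nat.sub_mul, one_mul]
  have hsub_wr1 : (w - r - 1) * p = w * p - r * p - p := by
    rw [Nat.sub_mul, Nat.sub_mul, one_mul]
  have hultr : ¬ d ≤ a → u < r := by
    intro hda
    rcases lt_or_eq_of_le hur with h | h
    · exact h
    · exfalso; rw [h] at hk; omega
  have hwr1 : g ≤ a → r < w := by
    intro hga
    rcases lt_or_eq_of_le hrw with h | h
    · exact h
    · exfalso; rw [← h] at hW; omega
  have hdiv_ik : (i - k) / p = if d ≤ a then r - u else r - u - 1 := by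
    split_ifs with hda
    · have h3 : i - k = (r - u) * p + (a - d) := by rw [Nat.sub_mul]; omega
      rw [h3]; exact helper_div _ _ hp (by omega)
    · have hmul2 : u * p + p ≤ r * p := by
        have h4 := Nat.mul_le_mul_right p (show u + 1 ≤ r from hultr hda)
        rwa [add_mul, one_mul] at h4
      have h3 : i - k = (r - u - 1) * p + (p + a - d) := by rw [hsub_ru1]; omega
      rw [h3]; exact helper_div _ _ hp (by omega)
  have hdiv_S : S / p = if g ≤ a then w - r - 1 else w - r := by
    split_ifs with hga
    · have hmul3 : r * p + p ≤ w * p := by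
        have h4 := Nat.mul_le_mul_right p (show r + 1 ≤ w from hwr1 hga)
        rwa [add_mul, one_mul] at h4
      have h3 : S = (w - r - 1) * p + (p + g - a - 1) := by rw [hsub_wr1]; omega
      rw [h3]; exact helper_div _ _ hp (by omega)
    · have h3 : S = (w - r) * p + (g - a - 1) := by rw [Nat.sub_mul]; omega
      rw [h3]; exact helper_div _ _ hp (by omega)
  have hsucc : (r + 1) * p = r * p + p := by rw [add_mul, one_mul]
  have hdiv_i1 : (i + 1) / p = if a = p - 1 then r + 1 else r := by
    split_ifs with hap1
    · have h3 : i + 1 = (r + 1) * p + 0 := by rw [hsucc]; omega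
      rw [h3]; exact helper_div _ _ hp hp
    · have h3 : i + 1 = r * p + (a + 1) := by omega
      rw [h3]; exact helper_div _ _ hp (by omega)
  have hdvd_i1 : p ∣ (i + 1) ↔ a = p - 1 := by
    constructor
    · intro hdvd
      by_contra hap1
      have h3 : i + 1 = r * p + (a + 1) := by omega
      rw [h3, helper_dvd _ _ (by omega)] at hdvd
      omega
    · intro hap1
      have h3 : i + 1 = (r + 1) * p := by rw [hsucc]; omega
      rw [h3]; exact dvd_mul_left p (r + 1)
  -- rewrite the coefficient function
  have e1 : (i : ℤ) - (k : ℤ) = ((i - k : ℕ) : ℤ) := by omega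
  have e2 : (i : ℤ) + (M2 + (k : ℤ)) + 1 = ((i + S + 1 : ℕ) : ℤ) := by push_cast; omega
  have e3 : (i : ℤ) + 1 = ((i + 1 : ℕ) : ℤ) := by push_cast; ring
  have e4 : (k : ℤ) + (M2 + (k : ℤ)) + 1 = ((k + S + 1 : ℕ) : ℤ) := by push_cast; omega
  have e5 : ((i + S + 1 : ℕ) : ℤ) - ((i + 1 : ℕ) : ℤ) = ((S : ℕ) : ℤ) := by push_cast; ring
  have hfun : (fun q => aCoeff q i k (M2 + k)) = (fun q : ℂ =>
      (-1 : ℂ) ^ ((i : ℤ) + (k : ℤ)) * (qFact q i * (qFact q k * qFact q (i - k))⁻¹) *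
        (qFact q (i + S + 1) * (qFact q (i + 1) * qFact q S)⁻¹)⁻¹ *
        qNum q ((k + S + 1 : ℕ) : ℤ) * (qNum q ((i + 1 : ℕ) : ℤ))⁻¹) := by
    funext q
    unfold aCoeff qBinom
    rw [if_pos ⟨Int.natCast_nonneg k, by exact_mod_cast hik⟩]
    rw [e2, e3, e4]
    rw [if_pos ⟨Int.natCast_nonneg (i + 1),
      by exact_mod_cast (show i + 1 ≤ i + S + 1 by omega)⟩]
    rw [e5, e1]
    simp only [Int.toNat_natCast]
    ring
  -- pole order of the whole coefficient
  have hsign : PoleOrd qc 0 (fun _ : ℂ => (-1 : ℂ) ^ ((i : ℤ) + (k : ℤ))) :=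
    PoleOrd.const (zpow_ne_zero _ (by norm_num))
  have hfi := poleOrd_qFact hroot i
  have hfk := poleOrd_qFact hroot k
  have hfik := poleOrd_qFact hroot (i - k)
  have hfw := poleOrd_qFact hroot (i + S + 1)
  have hfi1 := poleOrd_qFact hroot (i + 1)
  have hfS := poleOrd_qFact hroot S
  have hnum : PoleOrd qc (if p ∣ (k + S + 1) then -1 else 0)
      (fun q => qNum q ((k + S + 1 : ℕ) : ℤ)) := by
    split_ifs with h2
    · exact poleOrd_qNum_of_dvd hroot (by omega) h2
    · exact poleOrd_qNum_of_not_dvd hroot (by omega) h2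
  have hden : PoleOrd qc (if p ∣ (i + 1) then -1 else 0)
      (fun q => qNum q ((i + 1 : ℕ) : ℤ)) := by
    split_ifs with h2
    · exact poleOrd_qNum_of_dvd hroot (by omega) h2
    · exact poleOrd_qNum_of_not_dvd hroot (by omega) h2
  have htot := PoleOrd.mul hroot (PoleOrd.mul hroot (PoleOrd.mul hroot (PoleOrd.mul hroot hsign
      (PoleOrd.mul hroot hfi (PoleOrd.mul hroot hfk hfik).inv))
      (PoleOrd.mul hroot hfw (PoleOrd.mul hroot hfi1 hfS).inv).inv) hnum) hden.inv
  have harith : (0 + (-((i / p : ℕ) : ℤ) + -(-((k / p : ℕ) : ℤ) + -(((i - k) / p : ℕ) : ℤ))) +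
      -(-(((i + S + 1) / p : ℕ) : ℤ) + -(-(((i + 1) / p : ℕ) : ℤ) + -((S / p : ℕ) : ℤ))) +
      (if p ∣ (k + S + 1) then (-1 : ℤ) else 0) + -(if p ∣ (i + 1) then (-1 : ℤ) else 0)) =
      ((if g ≤ a then (1 : ℤ) else 0) + (if d ≤ a then 1 else 0) - 1 -
        (if p ∣ (k + S + 1) then 1 else 0)) := by
    rw [hdiv_i, hdiv_k, hdiv_ik, hdiv_w, hdiv_i1, hdiv_S]
    simp only [hdvd_i1]
    have hultr' : d ≤ a ∨ u < r := by
      by_cases hda : d ≤ a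
      · exact Or.inl hda
      · exact Or.inr (hultr hda)
    have hwr1' : ¬ g ≤ a ∨ r < w := by
      by_cases hga : g ≤ a
      · exact Or.inr (hwr1 hga)
      · exact Or.inl hga
    split_ifs <;> omega
  have hP : PoleOrd qc ((if g ≤ a then (1 : ℤ) else 0) + (if d ≤ a then 1 else 0) - 1 -
      (if p ∣ (k + S + 1) then 1 else 0)) (fun q => aCoeff q i k (M2 + k)) := by
    rw [hfun]
    exact htot.congr_e harith
  have hcrit_iff : (M2 + 2 * k + 1) % (p : ℤ) = 0 ↔ p ∣ (k + S + 1) := by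
    have hks : (M2 + 2 * k + 1 : ℤ) = ((k + S + 1 : ℕ) : ℤ) := by push_cast; omega
    rw [hks]
    constructor
    · intro h0
      exact_mod_cast Int.dvd_of_emod_eq_zero h0
    · intro h0
      exact Int.emod_eq_zero_of_dvd (by exact_mod_cast h0)
  refine ⟨?_, ?_, ?_⟩
  · intro h0
    have hcrit := hcrit_iff.1 h0
    refine regularAt_of_poleOrd hroot ?_ hP
    rw [if_pos hcrit]
    split_ifs <;> omega
  · intro hne
    have hncrit : ¬ p ∣ (k + S + 1) := fun h2 => hne (hcrit_iff.2 h2)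
    constructor
    · intro hsing
      by_contra hcond
      refine hsing (regularAt_of_poleOrd hroot ?_ hP)
      rw [if_neg hncrit]
      split_ifs with h1 h2
      · exact absurd ⟨h1, h2⟩ hcond
      all_goals omega
    · rintro ⟨hg', hd'⟩
      have hE1 : ((if g ≤ a then (1 : ℤ) else 0) + (if d ≤ a then 1 else 0) - 1 -
          (if p ∣ (k + S + 1) then 1 else 0)) = 1 := by
        rw [if_pos hg', if_pos hd', if_neg hncrit]; norm_num
      exact not_regularAt_of_poleOrd_one hroot (hE1 ▸ hP)
  · exact simplePole_of_poleOrd hroot (by split_ifs <;> omega) hP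


end
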